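/- Let Y = U D Vᵀ with U ∈ O_ℂ(n), V ∈ O_ℂ(t), D ∈ ℂ^{n×t} diagonal with nonzero diagonal entries d_i whose squares are pairwise distinct. Suppose A ∈ ℂ^{n×t} satisfies: trace((D - A) Aᵀ Zᵀ) = 0 for every skew-symmetric Z ∈ ℂ^{n×n}, and trace((D - A)ᵀ A Zᵀ) = 0 for every skew-symmetric Z ∈ ℂ^{t×t}. Then A is a diagonal matrix. -/

import Mathlib

open Matrix

lemma aux_skew {k : ℕ} (M : Matrix (Fin k) (Fin k) ℂ)
    (h : ∀ Z : Matrix (Fin k) (Fin k) ℂ, Zᵀ = -Z → (M * Zᵀ).trace = 0) :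
    ∀ p q, M p q = M q p := by
  intro p q
  by_cases hpq : p = q
  · subst hpq; rfl
  have hz : (Matrix.single p q (1:ℂ) - Matrix.single q p 1)ᵀ
      = -(Matrix.single p q (1:ℂ) - Matrix.single q p 1) := by
    ext a b
    simp [Matrix.single, transpose_apply, and_comm]
  have := h _ hz
  rw [hz] at this
  simp only [Matrix.trace, diag_apply, mul_apply, neg_sub, Matrix.sub_apply] at this
  simp only [Matrix.single, of_apply, mul_sub, Finset.sum_sub_distrib, ite_and, mul_ite,
    mul_one, mul_zero, Finset.sum_ite_eq, Finset.sum_ite_eq'] at this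
  simp at this
  exact sub_eq_zero.mp this

/-- Let `Y = U D Vᵀ` with `U ∈ O_ℂ(n)`, `V ∈ O_ℂ(t)` and `D ∈ ℂ^{n×t}` diagonal with nonzero
diagonal entries whose squares are pairwise distinct. If `A ∈ ℂ^{n×t}` satisfies
`trace((D - A) Aᵀ Zᵀ) = 0` for every skew-symmetric `Z ∈ ℂ^{n×n}` and
`trace((D - A)ᵀ A Zᵀ) = 0` for every skew-symmetric `Z ∈ ℂ^{t×t}`, then `A` is diagonal. -/
theorem stmt16 {n t : ℕ} (hnt : n ≤ t)
    (U : Matrix (Fin n) (Fin n) ℂ) (V : Matrix (Fin t) (Fin t) ℂ)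
    (Y D A : Matrix (Fin n) (Fin t) ℂ) (d : Fin n → ℂ)
    (hU : U * Uᵀ = 1) (hV : V * Vᵀ = 1) (hY : Y = U * D * Vᵀ)
    (hD : ∀ (i : Fin n) (j : Fin t), D i j = if (j : ℕ) = (i : ℕ) then d i else 0)
    (hd0 : ∀ i, d i ≠ 0) (hd2 : ∀ i j, d i ^ 2 = d j ^ 2 → i = j)
    (h1 : ∀ Z : Matrix (Fin n) (Fin n) ℂ, Zᵀ = -Z → ((D - A) * Aᵀ * Zᵀ).trace = 0)
    (h2 : ∀ Z : Matrix (Fin t) (Fin t) ℂ, Zᵀ = -Z → ((D - A)ᵀ * A * Zᵀ).trace = 0) :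
    ∀ (i : Fin n) (j : Fin t), (i : ℕ) ≠ (j : ℕ) → A i j = 0 := by
  set c : Fin n → Fin t := Fin.castLE hnt with hc
  -- entries of D : D m j = if j = c m then d m else 0
  have hD' : ∀ (m : Fin n) (j : Fin t), D m j = if j = c m then d m else 0 := by
    intro m j
    rw [hD]
    congr 1
    simp [Fin.ext_iff, hc]
  -- row sums: Σ_m D m j * A m l
  have hrow : ∀ (i : Fin n) (l : Fin t), (∑ m, D m (c i) * A m l) = d i * A i l := by
    intro i l
    have : ∀ m, D m (c i) * A m l = if i = m then d m * A m l else 0 := by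
      intro m
      rw [hD']
      by_cases h : i = m
      · subst h; simp
      · have : ¬ (c i = c m) := fun hh => h (Fin.castLE_injective hnt hh)
        simp [this, h]
    simp [this, Finset.sum_ite_eq]
  have hrow0 : ∀ (j : Fin t), (n : ℕ) ≤ (j : ℕ) → ∀ l, (∑ m, D m j * A m l) = 0 := by
    intro j hj l
    apply Finset.sum_eq_zero
    intro m _
    have : ¬ (j = c m) := by
      intro hh
      have : (j : ℕ) = (m : ℕ) := by rw [hh]; simp [hc]
      omega
    rw [hD', if_neg this, zero_mul]
  have hcol : ∀ (p q : Fin n), (∑ x, D p x * A q x) = d p * A q (c p) := by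
    intro p q
    simp [hD', ite_mul, zero_mul, Finset.sum_ite_eq']
  -- symmetry from h1 : D * Aᵀ is symmetric
  have S1 : ∀ p q : Fin n, d p * A q (c p) = d q * A p (c q) := by
    intro p q
    have hs := aux_skew _ h1 p q
    have haa : (A * Aᵀ) p q = (A * Aᵀ) q p := by
      have : (A * Aᵀ)ᵀ = A * Aᵀ := by rw [transpose_mul, transpose_transpose]
      exact (congrFun (congrFun this q) p)
    simp only [Matrix.sub_mul, Matrix.sub_apply] at hs
    have hDA : (D * Aᵀ) p q = (D * Aᵀ) q p := by linear_combination hs + haa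
    simpa [mul_apply, transpose_apply, hcol] using hDA
  -- symmetry from h2 : Dᵀ * A is symmetric (minus AᵀA which is symmetric)
  have S2 : ∀ j l : Fin t, (∑ m, D m j * A m l) = (∑ m, D m l * A m j) := by
    intro j l
    have hs := aux_skew _ h2 j l
    have haa : (Aᵀ * A) j l = (Aᵀ * A) l j := by
      have : (Aᵀ * A)ᵀ = Aᵀ * A := by rw [transpose_mul, transpose_transpose]
      exact (congrFun (congrFun this l) j)
    simp only [transpose_sub, Matrix.sub_mul, Matrix.sub_apply] at hs
    have hDA : (Dᵀ * A) j l = (Dᵀ * A) l j := by linear_combination hs + haa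
    simpa [mul_apply, transpose_apply] using hDA
  intro i j hij
  by_cases hjn : (j : ℕ) < n
  · set k : Fin n := ⟨j, hjn⟩ with hk
    have hck : c k = j := by simp [hc, hk]
    have hki : k ≠ i := fun h => hij (by rw [← h])
    -- from S2 at (c i, c k)
    have e1 : d i * A i (c k) = d k * A k (c i) := by
      have := S2 (c i) (c k)
      rwa [hrow, hrow] at this
    have e2 : d i * A k (c i) = d k * A i (c k) := S1 i k
    have key : (d i ^ 2 - d k ^ 2) * A i (c k) = 0 := by linear_combination (d i) * e1 + (d k) * e2
    have hne : d i ^ 2 - d k ^ 2 ≠ 0 := by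
      intro h
      exact hki (hd2 i k (by linear_combination h)).symm
    have := mul_eq_zero.mp key
    rcases this with h | h
    · exact absurd h hne
    · rwa [hck] at h
  · have := S2 (c i) j
    rw [hrow, hrow0 j (by omega)] at this
    exact (mul_eq_zero.mp this).resolve_left (hd0 i)
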